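/- For the wormhole metric of Section IV with E = 0, the first derivatives of ψ(x,y) = Δ(κ − g^{ij}p_ip_j) vanish at x = y = 0 and the second derivatives satisfy ∂²_x ψ|_{(0,0)} = ∂²_y ψ|_{(0,0)} = 2(L²κ − 𝓛²). -/

import Mathlib

/-- The function `ψ(x,y) = Δ (κ − g^{ij} pᵢ pⱼ)` for the wormhole metric of
Section IV, with `p₀ = −E`, `p₃ = 𝓛`, `Δ = L²(x² + y²)`, `Δ₁ = L²(x² + 1)`,
and inverse-metric components `X^{00} = −L²x² + a²/Δ₁`, `X^{03} = −aLx/Δ₁`,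
`X^{33} = −L²/Δ₁`, `Y^{00} = −L²y²`, `Y^{33} = 1/(1 − y²)`. -/
noncomputable def WHpsi (a L E Lam κ x y : ℝ) : ℝ :=
  L ^ 2 * (x ^ 2 + y ^ 2) * κ -
    ((-(L ^ 2 * x ^ 2) + a ^ 2 / (L ^ 2 * (x ^ 2 + 1))) * E ^ 2
      + 2 * (a * L * x / (L ^ 2 * (x ^ 2 + 1))) * E * Lam
      + (-(L ^ 2) / (L ^ 2 * (x ^ 2 + 1))) * Lam ^ 2
      + (-(L ^ 2 * y ^ 2)) * E ^ 2
      + Lam ^ 2 / (1 - y ^ 2))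

/-- Equation (35): for the wormhole metric with `E = 0`, the first derivatives
of `ψ` vanish at `x = y = 0` and the second derivatives both equal
`2(L²κ − 𝓛²)`. -/
theorem WHpsi_second_derivs (a L Lam κ : ℝ) (hL : 0 < L)
    (hκ : κ = 0 ∨ κ = -1) :
    deriv (fun x => WHpsi a L 0 Lam κ x 0) 0 = 0 ∧
    deriv (fun y => WHpsi a L 0 Lam κ 0 y) 0 = 0 ∧
    iteratedDeriv 2 (fun x => WHpsi a L 0 Lam κ x 0) 0 =
      2 * (L ^ 2 * κ - Lam ^ 2) ∧
    iteratedDeriv 2 (fun y => WHpsi a L 0 Lam κ 0 y) 0 =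
      2 * (L ^ 2 * κ - Lam ^ 2) := by
  have hL2 : (L : ℝ) ^ 2 ≠ 0 := by positivity
  -- the x-section
  have hfe : (fun x => WHpsi a L 0 Lam κ x 0)
      = fun x : ℝ => L ^ 2 * κ * x ^ 2 + Lam ^ 2 * (x ^ 2 + 1)⁻¹ - Lam ^ 2 := by
    funext x
    have hx : (x : ℝ) ^ 2 + 1 ≠ 0 := by positivity
    simp only [WHpsi]
    field_simp
    ring
  -- the y-section
  have hge : (fun y => WHpsi a L 0 Lam κ 0 y)
      = fun y : ℝ => L ^ 2 * κ * y ^ 2 + Lam ^ 2 - Lam ^ 2 * (1 - y ^ 2)⁻¹ := by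
    funext y
    simp only [WHpsi]
    rw [div_eq_mul_inv (Lam ^ 2)]
    have h1 : -(L ^ 2) / (L ^ 2 * ((0:ℝ) ^ 2 + 1)) = -1 := by
      field_simp
      norm_num
    rw [h1]; ring
  -- derivative of the x-section, everywhere
  have hf' : ∀ x : ℝ,
      HasDerivAt (fun x : ℝ => L ^ 2 * κ * x ^ 2 + Lam ^ 2 * (x ^ 2 + 1)⁻¹ - Lam ^ 2)
        (2 * L ^ 2 * κ * x - Lam ^ 2 * (2 * x) / (x ^ 2 + 1) ^ 2) x := by
    intro x
    have hx : (x : ℝ) ^ 2 + 1 ≠ 0 := by positivity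
    have h1 : HasDerivAt (fun x : ℝ => x ^ 2 + 1) (2 * x) x := by
      simpa using (hasDerivAt_pow 2 x).add_const 1
    have h2 := (h1.inv hx).const_mul (Lam ^ 2)
    have h3 : HasDerivAt (fun x : ℝ => L ^ 2 * κ * x ^ 2) (L ^ 2 * κ * (2 * x)) x := by
      simpa using (hasDerivAt_pow 2 x).const_mul (L ^ 2 * κ)
    refine ((h3.add h2).sub_const (Lam ^ 2)).congr_deriv ?_
    ring
  -- derivative of the y-section on (-1,1)
  have hg' : ∀ y ∈ Set.Ioo (-1 : ℝ) 1,
      HasDerivAt (fun y : ℝ => L ^ 2 * κ * y ^ 2 + Lam ^ 2 - Lam ^ 2 * (1 - y ^ 2)⁻¹)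
        (2 * L ^ 2 * κ * y - Lam ^ 2 * (2 * y) / (1 - y ^ 2) ^ 2) y := by
    intro y hy
    have hy1 : (1 : ℝ) - y ^ 2 ≠ 0 := by nlinarith [hy.1, hy.2]
    have h1 : HasDerivAt (fun y : ℝ => 1 - y ^ 2) (-(2 * y)) y := by
      simpa using (hasDerivAt_pow 2 y).const_sub 1
    have h2 := (h1.inv hy1).const_mul (Lam ^ 2)
    have h3 : HasDerivAt (fun y : ℝ => L ^ 2 * κ * y ^ 2 + Lam ^ 2)
        (L ^ 2 * κ * (2 * y)) y := by
      simpa using ((hasDerivAt_pow 2 y).const_mul (L ^ 2 * κ)).add_const (Lam ^ 2)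
    refine (h3.sub h2).congr_deriv ?_
    ring
  have hmem : Set.Ioo (-1 : ℝ) 1 ∈ nhds (0 : ℝ) := isOpen_Ioo.mem_nhds (by norm_num)
  refine ⟨?_, ?_, ?_, ?_⟩
  · rw [hfe, (hf' 0).deriv]; norm_num
  · rw [hge, (hg' 0 (by norm_num)).deriv]; norm_num
  · rw [hfe, iteratedDeriv_succ, iteratedDeriv_one]
    have hdf : deriv (fun x : ℝ => L ^ 2 * κ * x ^ 2 + Lam ^ 2 * (x ^ 2 + 1)⁻¹ - Lam ^ 2)
        = fun x : ℝ => 2 * L ^ 2 * κ * x - Lam ^ 2 * (2 * x) / (x ^ 2 + 1) ^ 2 :=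
      funext fun x => (hf' x).deriv
    rw [hdf]
    have hu : HasDerivAt (fun x : ℝ => Lam ^ 2 * (2 * x)) (Lam ^ 2 * 2) 0 := by
      simpa using ((hasDerivAt_id (0 : ℝ)).const_mul 2).const_mul (Lam ^ 2)
    have hv : HasDerivAt (fun x : ℝ => (x ^ 2 + 1) ^ 2)
        (2 * ((0 : ℝ) ^ 2 + 1) ^ 1 * (2 * 0)) 0 := by
      have h1 : HasDerivAt (fun x : ℝ => x ^ 2 + 1) (2 * (0 : ℝ)) 0 := by
        simpa using (hasDerivAt_pow 2 (0 : ℝ)).add_const 1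
      exact h1.pow 2
    have hlin : HasDerivAt (fun x : ℝ => 2 * L ^ 2 * κ * x) (2 * L ^ 2 * κ) 0 := by
      simpa using (hasDerivAt_id (0 : ℝ)).const_mul (2 * L ^ 2 * κ)
    have hv0 : ((0 : ℝ) ^ 2 + 1) ^ 2 ≠ 0 := by norm_num
    have := hlin.sub (hu.div hv hv0)
    rw [show deriv (fun x : ℝ => 2 * L ^ 2 * κ * x - Lam ^ 2 * (2 * x) / (x ^ 2 + 1) ^ 2) 0 = _ from this.deriv]
    norm_num
    ring
  · rw [hge, iteratedDeriv_succ, iteratedDeriv_one]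
    have heq : deriv (fun y : ℝ => L ^ 2 * κ * y ^ 2 + Lam ^ 2 - Lam ^ 2 * (1 - y ^ 2)⁻¹)
        =ᶠ[nhds (0 : ℝ)]
        fun y : ℝ => 2 * L ^ 2 * κ * y - Lam ^ 2 * (2 * y) / (1 - y ^ 2) ^ 2 := by
      filter_upwards [hmem] with y hy
      exact (hg' y hy).deriv
    rw [heq.deriv_eq]
    have hu : HasDerivAt (fun y : ℝ => Lam ^ 2 * (2 * y)) (Lam ^ 2 * 2) 0 := by
      simpa using ((hasDerivAt_id (0 : ℝ)).const_mul 2).const_mul (Lam ^ 2)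
    have hv : HasDerivAt (fun y : ℝ => (1 - y ^ 2) ^ 2)
        (2 * ((1 : ℝ) - (0 : ℝ) ^ 2) ^ 1 * (-(2 * 0))) 0 := by
      have h1 : HasDerivAt (fun y : ℝ => 1 - y ^ 2) (-(2 * (0 : ℝ))) 0 := by
        simpa using (hasDerivAt_pow 2 (0 : ℝ)).const_sub 1
      exact h1.pow 2
    have hlin : HasDerivAt (fun y : ℝ => 2 * L ^ 2 * κ * y) (2 * L ^ 2 * κ) 0 := by
      simpa using (hasDerivAt_id (0 : ℝ)).const_mul (2 * L ^ 2 * κ)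
    have hv0 : ((1 : ℝ) - (0 : ℝ) ^ 2) ^ 2 ≠ 0 := by norm_num
    have := hlin.sub (hu.div hv hv0)
    rw [show deriv (fun y : ℝ => 2 * L ^ 2 * κ * y - Lam ^ 2 * (2 * y) / (1 - y ^ 2) ^ 2) 0 = _ from this.deriv]
    norm_num
    ring
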